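/- Let q > 1 be an integer and t > 0 a real number. Then t lies in ℤ[1/q] (i.e., t q^m is an integer for some m ≥ 0) if and only if the n-th digit of t in base q equals q - 1 for all sufficiently large n > 0. -/

import Mathlib

/-- For an integer `q > 1` and a real `t > 0`, `t ∈ ℤ[1/q]` (i.e. `t q^m ∈ ℤ` for some
`m ≥ 0`) if and only if the `n`-th digit of `t` in base `q` equals `q - 1` for all
sufficiently large `n > 0`. -/
theorem mem_zInvQ_iff_digits_eventually (q : ℤ) (hq : 1 < q) (t : ℝ) (ht : 0 < t) :
    (∃ m : ℕ, ∃ z : ℤ, t * (q : ℝ) ^ m = z) ↔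
      ∃ N : ℤ, 0 < N ∧ ∀ n : ℤ, N ≤ n →
        ⌈t * (q : ℝ) ^ n - 1⌉ - q * ⌈t * (q : ℝ) ^ (n - 1) - 1⌉ = q - 1 := by
  have hq1 : (1:ℝ) < (q:ℝ) := by exact_mod_cast hq
  have hq0 : (q:ℝ) ≠ 0 := by linarith
  have key : ∀ n : ℤ, (⌈t * (q : ℝ) ^ n - 1⌉ - q * ⌈t * (q : ℝ) ^ (n - 1) - 1⌉ = q - 1) ↔
      ⌈t * (q : ℝ) ^ n⌉ = q * ⌈t * (q : ℝ) ^ (n - 1)⌉ := by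
    intro n
    rw [show t * (q:ℝ)^n - 1 = t * (q:ℝ)^n - ((1:ℤ):ℝ) by push_cast; ring,
        show t * (q:ℝ)^(n-1) - 1 = t * (q:ℝ)^(n-1) - ((1:ℤ):ℝ) by push_cast; ring,
        Int.ceil_sub_intCast, Int.ceil_sub_intCast]
    constructor <;> intro h <;> linear_combination h
  constructor
  · rintro ⟨m, z, hz⟩
    refine ⟨m + 1, by positivity, fun n hn => ?_⟩
    rw [key]
    set a := (n - m).toNat with ha
    have hcast : ((a:ℤ)) = n - m := Int.toNat_of_nonneg (by omega)
    have ha1 : 1 ≤ a := by omega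
    have e1 : t * (q:ℝ)^n = (z:ℝ) * (q:ℝ)^a := by
      have h2 : t * (q:ℝ)^n = (t * (q:ℝ)^m) * (q:ℝ)^a := by
        rw [mul_assoc, ← zpow_natCast (q:ℝ) m, ← zpow_natCast (q:ℝ) a, ← zpow_add₀ hq0]
        congr 2
        omega
      rw [h2, hz]
    have e2 : t * (q:ℝ)^(n-1) = (z:ℝ) * (q:ℝ)^(a-1) := by
      have h2 : t * (q:ℝ)^(n-1) = (t * (q:ℝ)^m) * (q:ℝ)^(a-1) := by
        rw [mul_assoc, ← zpow_natCast (q:ℝ) m, ← zpow_natCast (q:ℝ) (a-1), ← zpow_add₀ hq0]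
        congr 2
        omega
      rw [h2, hz]
    rw [e1, e2, show ((z:ℝ)*(q:ℝ)^a) = ((z*q^a : ℤ):ℝ) by push_cast; ring,
        show ((z:ℝ)*(q:ℝ)^(a-1)) = ((z*q^(a-1) : ℤ):ℝ) by push_cast; ring,
        Int.ceil_intCast, Int.ceil_intCast,
        show a = (a-1)+1 by omega, show (a-1)+1-1 = a-1 by omega, pow_succ]
    ring
  · rintro ⟨N, hN, hdig⟩
    set x := t * (q:ℝ)^(N-1) with hx
    set c := ⌈x⌉ with hc
    have H : ∀ k : ℕ, ⌈t * (q:ℝ)^(N-1+(k:ℤ))⌉ = q^k * c := by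
      intro k
      induction k with
      | zero => simp [hc, hx]
      | succ k ih =>
        have h1 := (key (N-1+((k:ℤ)+1))).mp (hdig _ (by omega))
        rw [show (N-1+((k:ℤ)+1) - 1) = N-1+(k:ℤ) by ring] at h1
        push_cast
        rw [h1, ih, pow_succ]
        ring
    have hup : x ≤ (c:ℝ) := Int.le_ceil x
    have hlow : ∀ k : ℕ, ((q:ℝ)^k) * ((c:ℝ) - x) < 1 := by
      intro k
      have h1 := Int.ceil_lt_add_one (t * (q:ℝ)^(N-1+(k:ℤ)))
      rw [H k] at h1
      have h2 : t * (q:ℝ)^(N-1+(k:ℤ)) = x * (q:ℝ)^k := by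
        rw [hx, mul_assoc, zpow_add₀ hq0, zpow_natCast]
      rw [h2] at h1
      push_cast at h1
      nlinarith [h1]
    have hxc : x = (c:ℝ) := by
      by_contra hne
      have hlt : x < (c:ℝ) := lt_of_le_of_ne hup hne
      obtain ⟨k, hk⟩ := pow_unbounded_of_one_lt (1 / ((c:ℝ) - x)) hq1
      have hpos : (0:ℝ) < (c:ℝ) - x := by linarith
      have := hlow k
      rw [div_lt_iff₀ hpos] at hk
      nlinarith [this, hk]
    refine ⟨(N-1).toNat, c, ?_⟩
    have : ((((N-1).toNat : ℕ)):ℤ) = N - 1 := Int.toNat_of_nonneg (by omega)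
    rw [← zpow_natCast (q:ℝ) (N-1).toNat, this ]
    exact hxc
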